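/- Let G be a graph in standard Cohen–Macaulay very well-covered form on {x_1,…,x_n,y_1,…,y_n}, let G_1, G_2 be as defined, and let G_3 = G ∖ {x_i, y_i : x_i ∈ N[x_n] ∪ N[y_n]} (equivalently, the induced subgraph G_1 ∩ G_2). Set J_1 = x_{i_1}⋯x_{i_t}·y_n·I(G_1)^∨ and J_2 = x_{j_1}⋯x_{j_p}·x_n·I(G_2)^∨. Then in S = K[x_1,…,x_n,y_1,…,y_n] one has the ideal equality J_1 ∩ J_2 = x_{i_1}⋯x_{i_t}·x_{j_1}⋯x_{j_p}·x_n y_n·I(G_3)^∨. -/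

import Mathlib

/-- `C` is a vertex cover of the graph `G`. -/
def IsVertexCover {V : Type*} (G : SimpleGraph V) (C : Finset V) : Prop :=
  ∀ ⦃v w : V⦄, G.Adj v w → v ∈ C ∨ w ∈ C

/-- `C` is a minimal vertex cover of the graph `G`. -/
def IsMinVertexCover {V : Type*} (G : SimpleGraph V) (C : Finset V) : Prop :=
  IsVertexCover G C ∧ ∀ D ⊆ C, IsVertexCover G D → D = C

/-- `C` is an independent set of the graph `G`. -/
def IsIndepSet {V : Type*} (G : SimpleGraph V) (C : Finset V) : Prop :=
  ∀ ⦃v w : V⦄, v ∈ C → w ∈ C → ¬ G.Adj v w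

/-- `C` is a maximal independent set of the graph `G`. -/
def IsMaxIndepSet {V : Type*} (G : SimpleGraph V) (C : Finset V) : Prop :=
  IsIndepSet G C ∧ ∀ D, C ⊆ D → IsIndepSet G D → D = C

/-- A graph on the vertex set `{x_i, y_i : i ∈ ι}` (with `x_i = Sum.inl i` and
`y_i = Sum.inr i`) is in standard Cohen–Macaulay very well-covered form if it satisfies
conditions (i)–(v) of the Crupi–Rinaldo–Terai characterization. -/
def StdCMVWC {ι : Type*} [LinearOrder ι] [Fintype ι] (G : SimpleGraph (ι ⊕ ι)) : Prop :=
  IsMinVertexCover G (Finset.univ.image Sum.inl) ∧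
  IsMaxIndepSet G (Finset.univ.image Sum.inr) ∧
  (∀ i : ι, G.Adj (Sum.inl i) (Sum.inr i)) ∧
  (∀ i j : ι, G.Adj (Sum.inl i) (Sum.inr j) → i ≤ j) ∧
  (∀ i j : ι, G.Adj (Sum.inl i) (Sum.inr j) → ¬ G.Adj (Sum.inl i) (Sum.inl j)) ∧
  (∀ (i j k : ι) (z : ι ⊕ ι), (z = Sum.inl i ∨ z = Sum.inr i) →
    i ≠ j → j ≠ k → i ≠ k →
    G.Adj z (Sum.inl j) → G.Adj (Sum.inr j) (Sum.inl k) → G.Adj z (Sum.inl k))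


/-- The subgraph of `G` obtained by deleting all vertices outside `S` (together with
their incident edges), viewed as a graph on the same vertex set. -/
def restrictG {V : Type*} (G : SimpleGraph V) (S : Set V) : SimpleGraph V where
  Adj v w := G.Adj v w ∧ v ∈ S ∧ w ∈ S
  symm := ⟨fun v w (h : G.Adj v w ∧ v ∈ S ∧ w ∈ S) => ⟨h.1.symm, h.2.2, h.2.1⟩⟩
  loopless := ⟨fun v (h : G.Adj v v ∧ v ∈ S ∧ v ∈ S) => G.irrefl h.1⟩

/-- The vertex `x_n`. -/
def xnV (n : ℕ) : Fin (n + 1) ⊕ Fin (n + 1) := Sum.inl (Fin.last n)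

/-- The vertex `y_n`. -/
def ynV (n : ℕ) : Fin (n + 1) ⊕ Fin (n + 1) := Sum.inr (Fin.last n)

/-- The indices `i` with `x_i ∈ N(x_n)`, i.e. `N(x_n) ∖ {y_n} = {x_{i_1},…,x_{i_t}}`. -/
def nbrX (n : ℕ) (G : SimpleGraph (Fin (n + 1) ⊕ Fin (n + 1))) [DecidableRel G.Adj] :
    Finset (Fin (n + 1)) :=
  Finset.univ.filter fun i => G.Adj (Sum.inl i) (xnV n)

/-- The indices `i` with `x_i ∈ N(y_n)`, i.e. `N(y_n) ∖ {x_n} = {x_{j_1},…,x_{j_p}}`. -/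
def nbrY (n : ℕ) (G : SimpleGraph (Fin (n + 1) ⊕ Fin (n + 1))) [DecidableRel G.Adj] :
    Finset (Fin (n + 1)) :=
  Finset.univ.filter fun i => G.Adj (Sum.inl i) (ynV n)

/-- `G_1 = G ∖ {x_{i_1},y_{i_1},…,x_{i_t},y_{i_t},x_n,y_n}`. -/
def G₁ (n : ℕ) (G : SimpleGraph (Fin (n + 1) ⊕ Fin (n + 1))) [DecidableRel G.Adj] :
    SimpleGraph (Fin (n + 1) ⊕ Fin (n + 1)) :=
  restrictG G {v | Sum.elim id id v ∉ nbrX n G ∧ Sum.elim id id v ≠ Fin.last n}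

/-- `G_2 = G ∖ {x_{j_1},y_{j_1},…,x_{j_p},y_{j_p},x_n,y_n}`. -/
def G₂ (n : ℕ) (G : SimpleGraph (Fin (n + 1) ⊕ Fin (n + 1))) [DecidableRel G.Adj] :
    SimpleGraph (Fin (n + 1) ⊕ Fin (n + 1)) :=
  restrictG G {v | Sum.elim id id v ∉ nbrY n G ∧ Sum.elim id id v ≠ Fin.last n}

/-- `G_3 = G ∖ {x_i, y_i : x_i ∈ N[x_n] ∪ N[y_n]}`, the induced subgraph `G_1 ∩ G_2`. -/
def G₃ (n : ℕ) (G : SimpleGraph (Fin (n + 1) ⊕ Fin (n + 1))) [DecidableRel G.Adj] :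
    SimpleGraph (Fin (n + 1) ⊕ Fin (n + 1)) :=
  restrictG G {v | Sum.elim id id v ∉ nbrX n G ∧ Sum.elim id id v ∉ nbrY n G ∧
    Sum.elim id id v ≠ Fin.last n}

open MvPolynomial

/-- The set of minimal monomial generators of the cover ideal of `G`: the monomials
`∏_{v ∈ C} v` where `C` runs over the minimal vertex covers of `G`. -/
def genSet {V : Type*} (K : Type*) [Field K] (G : SimpleGraph V) :
    Set (MvPolynomial V K) :=
  {m | ∃ C : Finset V, IsMinVertexCover G C ∧ m = ∏ v ∈ C, X v}

/-- The cover ideal `I(G)^∨` of `G`, the Alexander dual of the edge ideal. -/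
noncomputable def coverIdeal {V : Type*} (K : Type*) [Field K] (G : SimpleGraph V) :
    Ideal (MvPolynomial V K) :=
  Ideal.span (genSet K G)

/-- The monomial `x_{i_1}⋯x_{i_t}·y_n`. -/
noncomputable def mX (n : ℕ) (G : SimpleGraph (Fin (n + 1) ⊕ Fin (n + 1)))
    [DecidableRel G.Adj] (K : Type*) [Field K] :
    MvPolynomial (Fin (n + 1) ⊕ Fin (n + 1)) K :=
  (∏ i ∈ nbrX n G, X (Sum.inl i)) * X (ynV n)

/-- The monomial `x_{j_1}⋯x_{j_p}·x_n`. -/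
noncomputable def mY (n : ℕ) (G : SimpleGraph (Fin (n + 1) ⊕ Fin (n + 1)))
    [DecidableRel G.Adj] (K : Type*) [Field K] :
    MvPolynomial (Fin (n + 1) ⊕ Fin (n + 1)) K :=
  (∏ j ∈ nbrY n G, X (Sum.inl j)) * X (xnV n)


open MvPolynomial Pointwise

section AuxLemmas

/-- Exponent vector of a squarefree monomial with support `C`. -/
noncomputable def eF {V : Type*} (C : Finset V) : V →₀ ℕ := ∑ v ∈ C, Finsupp.single v 1

lemma eF_apply {V : Type*} [DecidableEq V] (C : Finset V) (w : V) :
    eF C w = if w ∈ C then 1 else 0 := by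
  simp [eF, Finsupp.finset_sum_apply, Finsupp.single_apply]

lemma eF_mono {V : Type*} {C D : Finset V} (h : C ⊆ D) : eF C ≤ eF D := by
  classical
  rw [Finsupp.le_def]
  intro v
  rw [eF_apply, eF_apply]
  by_cases hv : v ∈ C
  · simp [hv, h hv]
  · simp [hv]

lemma eF_le_add {V : Type*} {C D E : Finset V} (h : ∀ x ∈ C, x ∈ D ∨ x ∈ E) (v : V) :
    eF C v ≤ eF D v + eF E v := by
  classical
  rw [eF_apply, eF_apply, eF_apply]
  by_cases hC : v ∈ C
  · rcases h v hC with h' | h' <;> simp [hC, h']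
  · simp [hC]

lemma X_eq_mono {V K : Type*} [CommSemiring K] (v : V) :
    (X v : MvPolynomial V K) = monomial (Finsupp.single v 1) 1 := rfl

lemma prod_X_eq_monomial {V K : Type*} [CommSemiring K] (C : Finset V) :
    (∏ v ∈ C, (X v : MvPolynomial V K)) = monomial (eF C) 1 := by
  classical
  induction C using Finset.induction_on with
  | empty => simp [eF]
  | @insert a s hvC ih =>
    rw [Finset.prod_insert hvC, ih, X_eq_mono, monomial_mul, one_mul,
      show eF (insert a s) = Finsupp.single a 1 + eF s from Finset.sum_insert hvC]

theorem exists_minCover_subset {V : Type*} (G : SimpleGraph V)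
    (C : Finset V) (h : IsVertexCover G C) : ∃ D, D ⊆ C ∧ IsMinVertexCover G D := by
  classical
  induction C using Finset.strongInductionOn with
  | _ C ih =>
    by_cases hm : ∀ D ⊆ C, IsVertexCover G D → D = C
    · exact ⟨C, Finset.Subset.refl C, h, hm⟩
    · push_neg at hm
      obtain ⟨D, hDC, hDcov, hne⟩ := hm
      obtain ⟨D', hD'D, hD'⟩ := ih D (Finset.ssubset_iff_subset_ne.mpr ⟨hDC, hne⟩) hDcov
      exact ⟨D', hD'D.trans hDC, hD'⟩

theorem isolated_not_mem_minCover {V : Type*} {G : SimpleGraph V}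
    {C : Finset V} (h : IsMinVertexCover G C) {v : V} (hv : ∀ w, ¬ G.Adj v w) : v ∉ C := by
  classical
  intro hvC
  have hcov : IsVertexCover G (C.erase v) := by
    intro a b hab
    rcases h.1 hab with ha | hb
    · exact Or.inl (Finset.mem_erase.mpr ⟨fun h' => hv b (h' ▸ hab), ha⟩)
    · exact Or.inr (Finset.mem_erase.mpr ⟨fun h' => hv a (h' ▸ hab.symm), hb⟩)
  have := h.2 _ (Finset.erase_subset _ _) hcov
  exact (this ▸ Finset.notMem_erase v C) hvC

lemma mem_span_monomial_mul_coverIdeal {V K : Type*} [Field K]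
    (a : V →₀ ℕ) (G : SimpleGraph V) (p : MvPolynomial V K) :
    p ∈ Ideal.span {(monomial a 1 : MvPolynomial V K)} * coverIdeal K G ↔
      ∀ m ∈ p.support, ∃ C, IsMinVertexCover G C ∧ a + eF C ≤ m := by
  have himg : ({(monomial a 1 : MvPolynomial V K)} : Set _) * genSet K G
      = (fun s => monomial s (1:K)) '' {s | ∃ C, IsMinVertexCover G C ∧ s = a + eF C} := by
    ext q
    constructor
    · rintro ⟨x, hx, y, ⟨C, hC, rfl⟩, rfl⟩
      rw [Set.mem_singleton_iff] at hx
      subst hx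
      exact ⟨a + eF C, ⟨C, hC, rfl⟩, by beta_reduce; rw [prod_X_eq_monomial, monomial_mul, one_mul]⟩
    · rintro ⟨s, ⟨C, hC, rfl⟩, rfl⟩
      exact ⟨monomial a 1, rfl, ∏ v ∈ C, X v, ⟨C, hC, rfl⟩,
        by beta_reduce; rw [prod_X_eq_monomial, monomial_mul, one_mul]⟩
  rw [coverIdeal, Ideal.span_mul_span', himg, mem_ideal_span_monomial_image]
  constructor
  · intro h m hm
    obtain ⟨si, ⟨C, hC, rfl⟩, hle⟩ := h m hm
    exact ⟨C, hC, hle⟩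
  · intro h m hm
    obtain ⟨C, hC, hle⟩ := h m hm
    exact ⟨a + eF C, ⟨C, hC, rfl⟩, hle⟩

lemma G₁_adj (n : ℕ) (G : SimpleGraph (Fin (n + 1) ⊕ Fin (n + 1))) [DecidableRel G.Adj]
    (v w : Fin (n + 1) ⊕ Fin (n + 1)) :
    (G₁ n G).Adj v w ↔ G.Adj v w ∧
      (Sum.elim id id v ∉ nbrX n G ∧ Sum.elim id id v ≠ Fin.last n) ∧
      (Sum.elim id id w ∉ nbrX n G ∧ Sum.elim id id w ≠ Fin.last n) := Iff.rfl

lemma G₂_adj (n : ℕ) (G : SimpleGraph (Fin (n + 1) ⊕ Fin (n + 1))) [DecidableRel G.Adj]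
    (v w : Fin (n + 1) ⊕ Fin (n + 1)) :
    (G₂ n G).Adj v w ↔ G.Adj v w ∧
      (Sum.elim id id v ∉ nbrY n G ∧ Sum.elim id id v ≠ Fin.last n) ∧
      (Sum.elim id id w ∉ nbrY n G ∧ Sum.elim id id w ≠ Fin.last n) := Iff.rfl

lemma G₃_adj (n : ℕ) (G : SimpleGraph (Fin (n + 1) ⊕ Fin (n + 1))) [DecidableRel G.Adj]
    (v w : Fin (n + 1) ⊕ Fin (n + 1)) :
    (G₃ n G).Adj v w ↔ G.Adj v w ∧
      (Sum.elim id id v ∉ nbrX n G ∧ Sum.elim id id v ∉ nbrY n G ∧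
        Sum.elim id id v ≠ Fin.last n) ∧
      (Sum.elim id id w ∉ nbrX n G ∧ Sum.elim id id w ∉ nbrY n G ∧
        Sum.elim id id w ≠ Fin.last n) := Iff.rfl

end AuxLemmas

/-- `J_1 ∩ J_2 = x_{i_1}⋯x_{i_t}·x_{j_1}⋯x_{j_p}·x_n y_n·I(G_3)^∨`, where
`J_1 = x_{i_1}⋯x_{i_t}·y_n·I(G_1)^∨` and `J_2 = x_{j_1}⋯x_{j_p}·x_n·I(G_2)^∨`. -/
theorem stmt6 (n : ℕ) (K : Type*) [Field K]
    (G : SimpleGraph (Fin (n + 1) ⊕ Fin (n + 1))) [DecidableRel G.Adj]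
    (hG : StdCMVWC G) :
    (Ideal.span {mX n G K} * coverIdeal K (G₁ n G)) ⊓
      (Ideal.span {mY n G K} * coverIdeal K (G₂ n G)) =
    Ideal.span {(∏ i ∈ nbrX n G, X (Sum.inl i)) * (∏ j ∈ nbrY n G, X (Sum.inl j)) *
        X (xnV n) * X (ynV n)} *
      coverIdeal K (G₃ n G) := by
  classical
  obtain ⟨hXmc, hYmi, hMatch, hOrd, hIv, hV5⟩ := hG
  have hmemA : ∀ i : Fin (n+1), i ∈ nbrX n G ↔ G.Adj (Sum.inl i) (Sum.inl (Fin.last n)) := by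
    intro i; exact Finset.mem_filter.trans ⟨fun h => h.2, fun h => ⟨Finset.mem_univ _, h⟩⟩
  have hmemB : ∀ i : Fin (n+1), i ∈ nbrY n G ↔ G.Adj (Sum.inl i) (Sum.inr (Fin.last n)) := by
    intro i; exact Finset.mem_filter.trans ⟨fun h => h.2, fun h => ⟨Finset.mem_univ _, h⟩⟩
  have hBnotA : ∀ i, i ∈ nbrY n G → i ∉ nbrX n G := fun i hiB hiA =>
    hIv i (Fin.last n) ((hmemB i).1 hiB) ((hmemA i).1 hiA)
  have hAlast : Fin.last n ∉ nbrX n G := fun h => G.irrefl ((hmemA _).1 h)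
  have hYind : ∀ j k : Fin (n+1), ¬ G.Adj (Sum.inr j) (Sum.inr k) := by
    intro j k
    refine hYmi.1 ?_ ?_ <;> simp
  have hprodX : ∀ (C : Finset (Fin (n+1))),
      (∏ i ∈ C, (X (Sum.inl i) : MvPolynomial (Fin (n+1) ⊕ Fin (n+1)) K))
        = monomial (eF (C.image Sum.inl)) 1 := by
    intro C
    rw [← prod_X_eq_monomial, Finset.prod_image]
    intro a _ b _ h
    exact Sum.inl_injective h
  have hmX : mX n G K
      = monomial (eF ((nbrX n G).image Sum.inl) + Finsupp.single (ynV n) 1) 1 := by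
    rw [mX, hprodX, X_eq_mono, monomial_mul, one_mul]
  have hmY : mY n G K
      = monomial (eF ((nbrY n G).image Sum.inl) + Finsupp.single (xnV n) 1) 1 := by
    rw [mY, hprodX, X_eq_mono, monomial_mul, one_mul]
  have hbig : (∏ i ∈ nbrX n G, X (Sum.inl i)) * (∏ j ∈ nbrY n G, X (Sum.inl j)) *
      X (xnV n) * X (ynV n) = monomial
        ((eF ((nbrX n G).image Sum.inl) + Finsupp.single (ynV n) 1) +
         (eF ((nbrY n G).image Sum.inl) + Finsupp.single (xnV n) 1)) (1:K) := by
    rw [hprodX, hprodX, X_eq_mono, X_eq_mono, monomial_mul, monomial_mul, monomial_mul]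
    simp only [one_mul]
    rw [monomial_eq_monomial_iff]
    exact Or.inl ⟨by abel, rfl⟩
  have key : ∀ m : (Fin (n+1) ⊕ Fin (n+1)) →₀ ℕ,
      ((∃ C, IsMinVertexCover (G₁ n G) C ∧
          eF ((nbrX n G).image Sum.inl) + Finsupp.single (ynV n) 1 + eF C ≤ m) ∧
       (∃ C, IsMinVertexCover (G₂ n G) C ∧
          eF ((nbrY n G).image Sum.inl) + Finsupp.single (xnV n) 1 + eF C ≤ m)) ↔
      (∃ C, IsMinVertexCover (G₃ n G) C ∧
        (eF ((nbrX n G).image Sum.inl) + Finsupp.single (ynV n) 1) +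
        (eF ((nbrY n G).image Sum.inl) + Finsupp.single (xnV n) 1) + eF C ≤ m) := by
    intro m
    constructor
    · rintro ⟨⟨C₁, hC₁, hle₁⟩, ⟨C₂, hC₂, hle₂⟩⟩
      have hcov3 : IsVertexCover (G₃ n G) C₁ := by
        intro v w hvw
        obtain ⟨hadj, ⟨h1, h2, h3⟩, ⟨h4, h5, h6⟩⟩ := (G₃_adj n G v w).mp hvw
        exact hC₁.1 ((G₁_adj n G v w).mpr ⟨hadj, ⟨h1, h3⟩, ⟨h4, h6⟩⟩)
      obtain ⟨C₃, hsub, hC₃⟩ := exists_minCover_subset _ C₁ hcov3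
      refine ⟨C₃, hC₃, ?_⟩
      rw [Finsupp.le_def]
      intro v
      have h1 := Finsupp.le_def.mp hle₁ v
      have h2 := Finsupp.le_def.mp hle₂ v
      have h31 := Finsupp.le_def.mp (eF_mono hsub) v
      simp only [Finsupp.add_apply] at h1 h2 ⊢
      by_cases hv : eF ((nbrY n G).image Sum.inl) v + Finsupp.single (xnV n) 1 v = 0
      · omega
      · obtain ⟨j, rfl, hj⟩ : ∃ j, v = Sum.inl j ∧ (j ∈ nbrY n G ∨ j = Fin.last n) := by
          by_cases hB : eF ((nbrY n G).image Sum.inl) v = 0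
          · have hone : Finsupp.single (xnV n) (1:ℕ) v ≠ 0 := by omega
            have hveq : v = xnV n := by
              by_contra hne
              rw [Finsupp.single_apply, if_neg (fun h => hne h.symm)] at hone
              exact hone rfl
            exact ⟨Fin.last n, hveq, Or.inr rfl⟩
          · have hvB' : v ∈ (nbrY n G).image Sum.inl := by
              by_contra hmem
              rw [eF_apply, if_neg hmem] at hB
              exact hB rfl
            obtain ⟨j, hjB, rfl⟩ := Finset.mem_image.mp hvB'
            exact ⟨j, rfl, Or.inl hjB⟩
        have hIso : ∀ w, ¬ (G₃ n G).Adj (Sum.inl j) w := by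
          intro w hw
          obtain ⟨_, ⟨_, hB3, hl3⟩, _⟩ := (G₃_adj n G _ w).mp hw
          rcases hj with hj | hj
          · exact hB3 hj
          · exact hl3 hj
        have hnot := isolated_not_mem_minCover hC₃ hIso
        have he3 : eF C₃ (Sum.inl j) = 0 := by rw [eF_apply, if_neg hnot]
        have heA : eF ((nbrX n G).image Sum.inl) (Sum.inl j : Fin (n+1) ⊕ Fin (n+1)) = 0 := by
          rw [eF_apply, if_neg]
          intro hmem
          obtain ⟨i, hiA, hieq⟩ := Finset.mem_image.mp hmem
          cases Sum.inl_injective hieq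
          rcases hj with hj | hj
          · exact hBnotA _ hj hiA
          · exact hAlast (hj ▸ hiA)
        have hsy : Finsupp.single (ynV n) (1:ℕ) (Sum.inl j) = 0 := by
          rw [Finsupp.single_apply, if_neg]
          intro h
          simp [ynV] at h
        omega
    · rintro ⟨C₃, hC₃, hle₃⟩
      have helperB : ∀ v w, G.Adj v w → Sum.elim id id w ≠ Fin.last n →
          Sum.elim id id v ∈ nbrY n G → Sum.elim id id v ≠ Fin.last n →
          v ∈ (nbrY n G).image Sum.inl ∨ w ∈ (nbrY n G).image Sum.inl := by
        rintro (j | j) w hadj hwl hvB hvl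
        · exact Or.inl (Finset.mem_image_of_mem _ hvB)
        · rcases w with k | k
          · by_cases hkB : k ∈ nbrY n G
            · exact Or.inr (Finset.mem_image_of_mem _ hkB)
            · exfalso
              have hjB : G.Adj (Sum.inl j) (Sum.inr (Fin.last n)) := (hmemB j).1 hvB
              have h := hV5 (Fin.last n) j k (Sum.inr (Fin.last n)) (Or.inr rfl)
                (fun h => hvl h.symm) (fun h => hkB (h ▸ hvB)) (fun h => hwl h.symm)
                hjB.symm hadj
              exact hkB ((hmemB k).2 h.symm)
          · exact absurd hadj (hYind j k)
      have helperA : ∀ v w, G.Adj v w → Sum.elim id id w ≠ Fin.last n →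
          Sum.elim id id v ∈ nbrX n G →
          v ∈ (nbrX n G).image Sum.inl ∨ w ∈ (nbrX n G).image Sum.inl := by
        rintro (j | j) w hadj hwl hvA
        · exact Or.inl (Finset.mem_image_of_mem _ hvA)
        · rcases w with k | k
          · by_cases hkA : k ∈ nbrX n G
            · exact Or.inr (Finset.mem_image_of_mem _ hkA)
            · exfalso
              have hjA : G.Adj (Sum.inl j) (Sum.inl (Fin.last n)) := (hmemA j).1 hvA
              have hjlast : j ≠ Fin.last n := fun h => hAlast (h ▸ hvA)
              have h := hV5 (Fin.last n) j k (Sum.inl (Fin.last n)) (Or.inl rfl)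
                (fun h => hjlast h.symm) (fun h => hkA (h ▸ hvA)) (fun h => hwl h.symm)
                hjA.symm hadj
              exact hkA ((hmemA k).2 h.symm)
          · exact absurd hadj (hYind j k)
      have hcov1 : IsVertexCover (G₁ n G) (C₃ ∪ (nbrY n G).image Sum.inl) := by
        intro v w hvw
        obtain ⟨hadj, ⟨hvA, hvl⟩, ⟨hwA, hwl⟩⟩ := (G₁_adj n G v w).mp hvw
        by_cases hvB : Sum.elim id id v ∈ nbrY n G
        · rcases helperB v w hadj hwl hvB hvl with h | h
          · exact Or.inl (Finset.mem_union_right _ h)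
          · exact Or.inr (Finset.mem_union_right _ h)
        · by_cases hwB : Sum.elim id id w ∈ nbrY n G
          · rcases helperB w v hadj.symm hvl hwB hwl with h | h
            · exact Or.inr (Finset.mem_union_right _ h)
            · exact Or.inl (Finset.mem_union_right _ h)
          · rcases hC₃.1 ((G₃_adj n G v w).mpr
                ⟨hadj, ⟨hvA, hvB, hvl⟩, ⟨hwA, hwB, hwl⟩⟩) with h | h
            · exact Or.inl (Finset.mem_union_left _ h)
            · exact Or.inr (Finset.mem_union_left _ h)
      have hcov2 : IsVertexCover (G₂ n G) (C₃ ∪ (nbrX n G).image Sum.inl) := by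
        intro v w hvw
        obtain ⟨hadj, ⟨hvB, hvl⟩, ⟨hwB, hwl⟩⟩ := (G₂_adj n G v w).mp hvw
        by_cases hvA : Sum.elim id id v ∈ nbrX n G
        · rcases helperA v w hadj hwl hvA with h | h
          · exact Or.inl (Finset.mem_union_right _ h)
          · exact Or.inr (Finset.mem_union_right _ h)
        · by_cases hwA : Sum.elim id id w ∈ nbrX n G
          · rcases helperA w v hadj.symm hvl hwA with h | h
            · exact Or.inr (Finset.mem_union_right _ h)
            · exact Or.inl (Finset.mem_union_right _ h)
          · rcases hC₃.1 ((G₃_adj n G v w).mpr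
                ⟨hadj, ⟨hvA, hvB, hvl⟩, ⟨hwA, hwB, hwl⟩⟩) with h | h
            · exact Or.inl (Finset.mem_union_left _ h)
            · exact Or.inr (Finset.mem_union_left _ h)
      obtain ⟨C₁, hsub₁, hC₁⟩ := exists_minCover_subset _ _ hcov1
      obtain ⟨C₂, hsub₂, hC₂⟩ := exists_minCover_subset _ _ hcov2
      refine ⟨⟨C₁, hC₁, ?_⟩, ⟨C₂, hC₂, ?_⟩⟩
      · rw [Finsupp.le_def]
        intro v
        have h3 := Finsupp.le_def.mp hle₃ v
        have hu := eF_le_add (fun x hx => Finset.mem_union.mp (hsub₁ hx)) v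
        simp only [Finsupp.add_apply] at h3 ⊢
        omega
      · rw [Finsupp.le_def]
        intro v
        have h3 := Finsupp.le_def.mp hle₃ v
        have hu := eF_le_add (fun x hx => Finset.mem_union.mp (hsub₂ hx)) v
        simp only [Finsupp.add_apply] at h3 ⊢
        omega
  ext p
  rw [Submodule.mem_inf, hmX, hmY, hbig, mem_span_monomial_mul_coverIdeal,
    mem_span_monomial_mul_coverIdeal, mem_span_monomial_mul_coverIdeal]
  constructor
  · rintro ⟨h1, h2⟩ m hm
    exact (key m).mp ⟨h1 m hm, h2 m hm⟩
  · intro h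
    exact ⟨fun m hm => ((key m).mpr (h m hm)).1, fun m hm => ((key m).mpr (h m hm)).2⟩
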